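/- Let R : ℝ² → ℝ be a Schwartz function (smooth with all derivatives rapidly decaying) that is even: R(−y) = R(y) for all y. For v ∈ ℝ² \ {0} define the diffusion matrix D_{mn}(v) = −(1/(2‖v‖)) ∫_{−∞}^{∞} ∂²_{y_m y_n} R(s v̂) ds for m, n ∈ {1,2}, and the drift E_m(v) = −(1/‖v‖²) ∫_0^{∞} s · (Δ ∂_{y_m} R)(s v̂) ds, where v̂ = v/‖v‖ and Δ is the Laplacian on ℝ². Then the functions D_{mn} are continuously differentiable on ℝ² \ {0} and for every v ≠ 0 and m ∈ {1,2}, Σ_{n=1}^{2} ∂_{v_n} D_{mn}(v) = E_m(v). -/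

import Mathlib

open MeasureTheory

set_option synthInstance.maxHeartbeats 1000000
set_option maxHeartbeats 1000000

namespace DivDrift

local notation "V2" => EuclideanSpace ℝ (Fin 2)

variable {F : Type*} [NormedAddCommGroup F] [NormedSpace ℝ F]

lemma schwartz_decay3 (f : SchwartzMap V2 F) :
    ∃ C : ℝ, 0 ≤ C ∧ ∀ x : V2, (1 + ‖x‖) ^ 3 * ‖f x‖ ≤ C := by
  refine ⟨2 ^ 3 * (Finset.Iic ((3 : ℕ), (0 : ℕ))).sup
      (fun m => SchwartzMap.seminorm ℝ m.1 m.2) f, ?_, ?_⟩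
  · have h := apply_nonneg ((Finset.Iic ((3 : ℕ), (0 : ℕ))).sup
      (fun m => SchwartzMap.seminorm ℝ (E := V2) (F := F) m.1 m.2)) f
    positivity
  · intro x
    have h := SchwartzMap.one_add_le_sup_seminorm_apply (𝕜 := ℝ)
      (m := ((3 : ℕ), (0 : ℕ))) (k := 3) (n := 0) le_rfl le_rfl f x
    simpa [norm_iteratedFDeriv_zero] using h

lemma decay_comp (f : SchwartzMap V2 F) {c : ℝ} (hc : 0 < c) :
    ∃ C : ℝ, 0 ≤ C ∧ ∀ (t : ℝ) (x : V2), c ≤ ‖x‖ →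
      (1 + |t|) ^ 3 * ‖f (t • x)‖ ≤ C := by
  obtain ⟨C, hC0, hC⟩ := schwartz_decay3 f
  have hδ0 : 0 < min 1 c := lt_min one_pos hc
  refine ⟨(min 1 c)⁻¹ ^ 3 * C, by positivity, fun t x hx => ?_⟩
  have h1 : 1 + |t| ≤ (min 1 c)⁻¹ * (1 + ‖t • x‖) := by
    rw [le_inv_mul_iff₀ hδ0, norm_smul, Real.norm_eq_abs]
    have h2 : min 1 c ≤ 1 := min_le_left _ _
    have h3 : min 1 c ≤ c := min_le_right _ _
    nlinarith [abs_nonneg t, mul_le_mul_of_nonneg_left hx (abs_nonneg t)]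
  calc (1 + |t|) ^ 3 * ‖f (t • x)‖
      ≤ ((min 1 c)⁻¹ * (1 + ‖t • x‖)) ^ 3 * ‖f (t • x)‖ := by
        gcongr
    _ = (min 1 c)⁻¹ ^ 3 * ((1 + ‖t • x‖) ^ 3 * ‖f (t • x)‖) := by ring
    _ ≤ (min 1 c)⁻¹ ^ 3 * C := by
        gcongr
        exact hC _

lemma integrable_bound (C : ℝ) :
    Integrable (fun t : ℝ => C / (1 + |t|) ^ 2) := by
  have h : Integrable (fun t : ℝ => (1 + ‖t‖) ^ (-(2 : ℝ))) volume :=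
    integrable_one_add_norm (by norm_num)
  have h2 := h.const_mul C
  refine h2.congr (Filter.Eventually.of_forall fun t => ?_)
  show C * (1 + ‖t‖) ^ (-(2 : ℝ)) = C / (1 + |t|) ^ 2
  rw [Real.norm_eq_abs, Real.rpow_neg (by positivity),
    show ((2 : ℝ)) = ((2 : ℕ) : ℝ) by norm_num, Real.rpow_natCast]
  rw [div_eq_mul_inv]

lemma key_bound (f : SchwartzMap V2 F) {c : ℝ} (hc : 0 < c) :
    ∃ C : ℝ, ∀ (t : ℝ) (x : V2), c ≤ ‖x‖ →
      ‖f (t • x)‖ ≤ C / (1 + |t|) ^ 2 ∧ |t| * ‖f (t • x)‖ ≤ C / (1 + |t|) ^ 2 := by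
  obtain ⟨C, hC0, hC⟩ := decay_comp f hc
  refine ⟨C, fun t x hx => ?_⟩
  have h3 := hC t x hx
  have hpos : (0 : ℝ) < (1 + |t|) ^ 2 := by positivity
  have hn : (0 : ℝ) ≤ ‖f (t • x)‖ := norm_nonneg _
  have ha : (0 : ℝ) ≤ |t| := abs_nonneg t
  constructor
  · rw [le_div_iff₀ hpos]
    nlinarith
  · rw [le_div_iff₀ hpos]
    nlinarith

lemma fderiv_eq_fderivCLM (f : SchwartzMap V2 F) :
    (fderiv ℝ (⇑f)) = ⇑(SchwartzMap.fderivCLM ℝ V2 _ f) :=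
  funext fun x => (SchwartzMap.fderivCLM_apply ℝ f x).symm

lemma continuous_comp_smul (f : SchwartzMap V2 F) (t : ℝ) :
    Continuous fun x : V2 => f (t • x) :=
  f.continuous.comp (continuous_id.const_smul t)

lemma continuous_smul_line (f : SchwartzMap V2 F) (x : V2) :
    Continuous fun t : ℝ => f (t • x) :=
  f.continuous.comp (continuous_id.smul continuous_const)

lemma integrable_comp_smul (f : SchwartzMap V2 F) {v : V2} (hv : v ≠ 0) :
    Integrable (fun t : ℝ => f (t • v)) := by
  have hv0 : (0 : ℝ) < ‖v‖ := norm_pos_iff.mpr hv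
  obtain ⟨C, hC⟩ := key_bound f hv0
  refine (integrable_bound C).mono' ((continuous_smul_line f v).aestronglyMeasurable)
    (Filter.Eventually.of_forall fun t => ?_)
  exact (hC t v le_rfl).1

lemma integrable_mul_comp_smul (f : SchwartzMap V2 F) {v : V2} (hv : v ≠ 0) :
    Integrable (fun t : ℝ => t • f (t • v)) := by
  have hv0 : (0 : ℝ) < ‖v‖ := norm_pos_iff.mpr hv
  obtain ⟨C, hC⟩ := key_bound f hv0
  refine (integrable_bound C).mono'
    ((continuous_id.smul (continuous_smul_line f v)).aestronglyMeasurable)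
    (Filter.Eventually.of_forall fun t => ?_)
  rw [norm_smul, Real.norm_eq_abs]
  exact (hC t v le_rfl).2

lemma integrable_mul_comp_smul' (h : SchwartzMap V2 ℝ) {v : V2} (hv : v ≠ 0) :
    Integrable (fun t : ℝ => t * h (t • v)) := by
  simpa [smul_eq_mul] using integrable_mul_comp_smul h hv

lemma integrable_smul_fderiv (f : SchwartzMap V2 ℝ) {v : V2} (hv : v ≠ 0) :
    Integrable (fun t : ℝ => t • fderiv ℝ (⇑f) (t • v)) := by
  rw [fderiv_eq_fderivCLM]
  exact integrable_mul_comp_smul (SchwartzMap.fderivCLM ℝ V2 _ f) hv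

lemma norm_smul_clm (t : ℝ) (L : V2 →L[ℝ] ℝ) : ‖t • L‖ = |t| * ‖L‖ := by
  rw [← Real.norm_eq_abs]; exact norm_smul t L

lemma norm_ge_of_ball {v x : V2} (hx : x ∈ Metric.ball v (‖v‖ / 2)) :
    ‖v‖ / 2 ≤ ‖x‖ := by
  have h1 : dist x v < ‖v‖ / 2 := hx
  have h2 : ‖v‖ - ‖x‖ ≤ dist x v := by
    rw [dist_eq_norm]
    calc ‖v‖ - ‖x‖ ≤ ‖v - x‖ := norm_sub_norm_le v x
      _ = ‖x - v‖ := (norm_sub_rev v x)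
  linarith

lemma hasFDerivAt_Phi (f : SchwartzMap V2 ℝ) {v : V2} (hv : v ≠ 0) :
    HasFDerivAt (fun x : V2 => ∫ t : ℝ, f (t • x))
      (∫ t : ℝ, t • fderiv ℝ (⇑f) (t • v)) v := by
  have hv0 : (0 : ℝ) < ‖v‖ := norm_pos_iff.mpr hv
  have hε : (0 : ℝ) < ‖v‖ / 2 := by linarith
  obtain ⟨C, hC⟩ := key_bound (SchwartzMap.fderivCLM ℝ V2 _ f) hε
  apply hasFDerivAt_integral_of_dominated_of_fderiv_le
    (F' := fun (x : V2) (t : ℝ) => t • fderiv ℝ (⇑f) (t • x))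
    (bound := fun t : ℝ => C / (1 + |t|) ^ 2) (Metric.ball_mem_nhds v hε)
  · exact Filter.Eventually.of_forall fun x =>
      (continuous_smul_line f x).aestronglyMeasurable
  · exact integrable_comp_smul f hv
  · rw [fderiv_eq_fderivCLM]
    exact (continuous_id.smul
      ((SchwartzMap.fderivCLM ℝ V2 _ f).continuous.comp
        (continuous_id.smul continuous_const))).aestronglyMeasurable
  · refine Filter.Eventually.of_forall fun t => fun x hx => ?_
    rw [fderiv_eq_fderivCLM, norm_smul_clm]
    exact (hC t x (norm_ge_of_ball hx)).2
  · exact integrable_bound C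
  · refine Filter.Eventually.of_forall fun t => fun x hx => ?_
    have h0 : HasFDerivAt (⇑f) (fderiv ℝ (⇑f) (t • x)) (t • x) :=
      f.differentiableAt.hasFDerivAt
    have hs : HasFDerivAt (fun y : V2 => t • y)
        (t • ContinuousLinearMap.id ℝ V2) x := (hasFDerivAt_id x).const_smul t
    have := h0.comp x hs
    convert this using 1
    ext w
    simp [ContinuousLinearMap.smul_apply, _root_.map_smul]
    ext w
    simp [ContinuousLinearMap.smul_apply, _root_.map_smul]

lemma continuousOn_Psi (f : SchwartzMap V2 ℝ) :
    ContinuousOn (fun v : V2 => ∫ t : ℝ, t • fderiv ℝ (⇑f) (t • v))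
      {v : V2 | v ≠ 0} := by
  intro v hv
  have hv0 : (0 : ℝ) < ‖v‖ := norm_pos_iff.mpr (hv : v ≠ 0)
  have hε : (0 : ℝ) < ‖v‖ / 2 := by linarith
  obtain ⟨C, hC⟩ := key_bound (SchwartzMap.fderivCLM ℝ V2 _ f) hε
  apply ContinuousAt.continuousWithinAt
  apply continuousAt_of_dominated (bound := fun t : ℝ => C / (1 + |t|) ^ 2)
  · refine Filter.Eventually.of_forall fun x => ?_
    rw [fderiv_eq_fderivCLM]
    exact (continuous_id.smul
      ((SchwartzMap.fderivCLM ℝ V2 _ f).continuous.comp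
        (continuous_id.smul continuous_const))).aestronglyMeasurable
  · refine Filter.eventually_of_mem (Metric.ball_mem_nhds v hε) fun x hx => ?_
    refine Filter.Eventually.of_forall fun t => ?_
    rw [fderiv_eq_fderivCLM, norm_smul_clm]
    exact (hC t x (norm_ge_of_ball hx)).2
  · exact integrable_bound C
  · refine Filter.Eventually.of_forall fun t => ?_
    rw [fderiv_eq_fderivCLM]
    exact (((SchwartzMap.fderivCLM ℝ V2 _ f).continuous.comp
      (continuous_id.const_smul t)).const_smul t).continuousAt

noncomputable def SchwartzMap.pderivCLM (_𝕜 : Type) (m : V2) : SchwartzMap V2 ℝ →L[ℝ] SchwartzMap V2 ℝ :=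
  SchwartzMap.evalCLM ℝ V2 ℝ m ∘L SchwartzMap.fderivCLM ℝ V2 ℝ

lemma SchwartzMap.pderivCLM_apply (_𝕜 : Type) (m : V2) (f : SchwartzMap V2 ℝ) (x : V2) :
    SchwartzMap.pderivCLM _𝕜 m f x = fderiv ℝ f x m := rfl

lemma pderiv_comm (R : SchwartzMap V2 ℝ) (a b : V2) (x : V2) :
    SchwartzMap.pderivCLM ℝ a (SchwartzMap.pderivCLM ℝ b R) x
      = SchwartzMap.pderivCLM ℝ b (SchwartzMap.pderivCLM ℝ a R) x := by
  have hΦ : (fun y : V2 => fderiv ℝ (⇑R) y) = ⇑(SchwartzMap.fderivCLM ℝ V2 _ R) :=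
    funext fun y => (SchwartzMap.fderivCLM_apply ℝ R y).symm
  have hΦd : DifferentiableAt ℝ (fun y : V2 => fderiv ℝ (⇑R) y) x := by
    rw [hΦ]; exact (SchwartzMap.fderivCLM ℝ V2 _ R).differentiableAt
  have key : ∀ w z : V2,
      fderiv ℝ (fun y : V2 => fderiv ℝ (⇑R) y w) x z
        = fderiv ℝ (fun y : V2 => fderiv ℝ (⇑R) y) x z w := by
    intro w z
    have h := fderiv_clm_apply (c := fun y : V2 => fderiv ℝ (⇑R) y)
      (u := fun _ : V2 => w) hΦd (differentiableAt_const w)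
    rw [h]
    simp
  have hsymm : ∀ w z : V2,
      fderiv ℝ (fun y : V2 => fderiv ℝ (⇑R) y) x w z
        = fderiv ℝ (fun y : V2 => fderiv ℝ (⇑R) y) x z w := by
    intro w z
    exact second_derivative_symmetric
      (fun y => R.differentiableAt.hasFDerivAt)
      hΦd.hasFDerivAt w z
  have e1 : (⇑(SchwartzMap.pderivCLM ℝ b R))
      = fun y : V2 => fderiv ℝ (⇑R) y b :=
    funext fun y => SchwartzMap.pderivCLM_apply ℝ b R y
  have e2 : (⇑(SchwartzMap.pderivCLM ℝ a R))
      = fun y : V2 => fderiv ℝ (⇑R) y a :=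
    funext fun y => SchwartzMap.pderivCLM_apply ℝ a R y
  calc SchwartzMap.pderivCLM ℝ a (SchwartzMap.pderivCLM ℝ b R) x
      = fderiv ℝ (fun y : V2 => fderiv ℝ (⇑R) y b) x a := by
        rw [SchwartzMap.pderivCLM_apply, e1]
    _ = fderiv ℝ (fun y : V2 => fderiv ℝ (⇑R) y) x a b := key b a
    _ = fderiv ℝ (fun y : V2 => fderiv ℝ (⇑R) y) x b a := hsymm a b
    _ = fderiv ℝ (fun y : V2 => fderiv ℝ (⇑R) y a) x b := (key a b).symm
    _ = SchwartzMap.pderivCLM ℝ b (SchwartzMap.pderivCLM ℝ a R) x := by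
        rw [SchwartzMap.pderivCLM_apply, e2]

lemma pderiv_parity (f : SchwartzMap V2 ℝ) (ε : ℝ)
    (hf : ∀ x : V2, f (-x) = ε * f x) (w : V2) :
    ∀ x : V2, SchwartzMap.pderivCLM ℝ w f (-x)
      = -ε * SchwartzMap.pderivCLM ℝ w f x := by
  intro x
  have hneg : HasFDerivAt (fun y : V2 => -y)
      (-(ContinuousLinearMap.id ℝ V2)) x := (hasFDerivAt_id x).neg
  have h1 : HasFDerivAt (fun y : V2 => f (-y))
      ((fderiv ℝ (⇑f) (-x)).comp (-(ContinuousLinearMap.id ℝ V2))) x :=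
    (f.differentiableAt.hasFDerivAt).comp x hneg
  have h2 : HasFDerivAt (fun y : V2 => ε * f y) (ε • fderiv ℝ (⇑f) x) x :=
    (f.differentiableAt.hasFDerivAt).const_mul ε
  have heq : (fun y : V2 => f (-y)) = fun y : V2 => ε * f y := funext hf
  rw [heq] at h1
  have huniq := h1.unique h2
  have happ := congrArg (fun (L : V2 →L[ℝ] ℝ) => L w) huniq
  simp only [ContinuousLinearMap.coe_comp', Function.comp_apply,
    ContinuousLinearMap.neg_apply, ContinuousLinearMap.coe_id', id_eq,
    ContinuousLinearMap.smul_apply, smul_eq_mul, map_neg] at happ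
  rw [SchwartzMap.pderivCLM_apply, SchwartzMap.pderivCLM_apply]
  linarith

lemma D_eq (g : SchwartzMap V2 ℝ) {w : V2} (hw : w ≠ 0) :
    -(1 / (2 * ‖w‖)) * (∫ s : ℝ, g ((s * ‖w‖⁻¹) • w))
      = -(1 / 2 : ℝ) * ∫ t : ℝ, g (t • w) := by
  have hw0 : (0 : ℝ) < ‖w‖ := norm_pos_iff.mpr hw
  have h := MeasureTheory.Measure.integral_comp_mul_right
    (fun t : ℝ => g (t • w)) (‖w‖⁻¹)
  simp only [inv_inv, abs_of_pos hw0, smul_eq_mul] at h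
  rw [h]
  field_simp

lemma fderiv_integral (g : SchwartzMap V2 ℝ) {v : V2} (hv : v ≠ 0) (w : V2) :
    (∫ t : ℝ, t • fderiv ℝ (⇑g) (t • v)) w
      = ∫ t : ℝ, t * fderiv ℝ (⇑g) (t • v) w := by
  rw [ContinuousLinearMap.integral_apply (integrable_smul_fderiv g hv)]
  congr 1

lemma integral_even_split (ψ : ℝ → ℝ) (hψ : ∀ t, ψ (-t) = ψ t) :
    (∫ t : ℝ, ψ t) = 2 * ∫ t in Set.Ioi (0 : ℝ), ψ t := by
  have h1 : (∫ t : ℝ, ψ t) = ∫ t : ℝ, ψ |t| := by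
    congr 1
    funext t
    rcases le_or_gt 0 t with h | h
    · rw [abs_of_nonneg h]
    · rw [abs_of_neg h]
      exact (hψ t).symm
  rw [h1, integral_comp_abs]

lemma integral_Ioi_scale (ψ : ℝ → ℝ) {c : ℝ} (hc : 0 < c) :
    (∫ s in Set.Ioi (0 : ℝ), ψ (c⁻¹ * s)) = c * ∫ t in Set.Ioi (0 : ℝ), ψ t := by
  have h := integral_comp_mul_left_Ioi ψ 0 (inv_pos.mpr hc)
  simpa [inv_inv, smul_eq_mul] using h

lemma main_calc (R : SchwartzMap V2 ℝ)
    (heven : ∀ y : V2, R (-y) = R y) (e : Fin 2 → V2) :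
    (∀ m n : Fin 2, ContDiffOn ℝ 1 (fun v : V2 =>
      -(1 / (2 * ‖v‖)) *
        ∫ s : ℝ, fderiv ℝ (fun y => fderiv ℝ (fun z => R z) y (e n)) (s • ‖v‖⁻¹ • v) (e m))
      {v : V2 | v ≠ 0}) ∧
    (∀ v : V2, v ≠ 0 → ∀ m : Fin 2,
      (∑ n : Fin 2, fderiv ℝ (fun v : V2 =>
        -(1 / (2 * ‖v‖)) *
          ∫ s : ℝ, fderiv ℝ (fun y => fderiv ℝ (fun z => R z) y (e n)) (s • ‖v‖⁻¹ • v) (e m))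
        v (e n)) =
      -(1 / ‖v‖ ^ 2) * ∫ s in Set.Ioi (0 : ℝ),
        s * ∑ i : Fin 2,
          fderiv ℝ (fun y => fderiv ℝ (fun z => fderiv ℝ (fun x => R x) z (e m)) y (e i))
            (s • ‖v‖⁻¹ • v) (e i)) := by
  have integrand_eq : ∀ (m n : Fin 2) (x : V2),
      fderiv ℝ (fun y => fderiv ℝ (fun z => R z) y (e n)) x (e m)
        = SchwartzMap.pderivCLM ℝ (e m) (SchwartzMap.pderivCLM ℝ (e n) R) x := by
    intro m n x
    have h1 : (fun y : V2 => fderiv ℝ (fun z => R z) y (e n))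
        = ⇑(SchwartzMap.pderivCLM ℝ (e n) R) :=
      funext fun y => (SchwartzMap.pderivCLM_apply ℝ (e n) R y).symm
    rw [h1]
    exact (SchwartzMap.pderivCLM_apply ℝ (e m) (SchwartzMap.pderivCLM ℝ (e n) R) x).symm
  have integrand3 : ∀ (m i : Fin 2) (x : V2),
      fderiv ℝ (fun y => fderiv ℝ (fun z => fderiv ℝ (fun x' => R x') z (e m)) y (e i)) x (e i)
        = SchwartzMap.pderivCLM ℝ (e i) (SchwartzMap.pderivCLM ℝ (e i)
            (SchwartzMap.pderivCLM ℝ (e m) R)) x := by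
    intro m i x
    have h0 : (fun z : V2 => fderiv ℝ (fun x' => R x') z (e m))
        = ⇑(SchwartzMap.pderivCLM ℝ (e m) R) :=
      funext fun z => (SchwartzMap.pderivCLM_apply ℝ (e m) R z).symm
    have h1 : (fun y : V2 => fderiv ℝ (fun z => fderiv ℝ (fun x' => R x') z (e m)) y (e i))
        = ⇑(SchwartzMap.pderivCLM ℝ (e i) (SchwartzMap.pderivCLM ℝ (e m) R)) := by
      funext y
      rw [h0]
      exact (SchwartzMap.pderivCLM_apply ℝ (e i) (SchwartzMap.pderivCLM ℝ (e m) R) y).symm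
    rw [h1]
    exact (SchwartzMap.pderivCLM_apply ℝ (e i)
      (SchwartzMap.pderivCLM ℝ (e i) (SchwartzMap.pderivCLM ℝ (e m) R)) x).symm
  have hDloc : ∀ (m n : Fin 2) (w : V2), w ≠ 0 →
      (-(1 / (2 * ‖w‖)) *
        ∫ s : ℝ, fderiv ℝ (fun y => fderiv ℝ (fun z => R z) y (e n)) (s • ‖w‖⁻¹ • w) (e m))
      = -(1 / 2 : ℝ) * ∫ t : ℝ,
          SchwartzMap.pderivCLM ℝ (e m) (SchwartzMap.pderivCLM ℝ (e n) R) (t • w) := by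
    intro m n w hw
    simp only [integrand_eq, smul_smul]
    exact D_eq _ hw
  constructor
  · intro m n
    have hG : ContDiffOn ℝ 1 (fun w : V2 => -(1 / 2 : ℝ) * ∫ t : ℝ,
        SchwartzMap.pderivCLM ℝ (e m) (SchwartzMap.pderivCLM ℝ (e n) R) (t • w))
        {v : V2 | v ≠ 0} := by
      rw [show (1 : WithTop ℕ∞) = 0 + 1 from (zero_add 1).symm,
        contDiffOn_succ_iff_fderiv_of_isOpen isOpen_ne]
      refine ⟨fun w hw => ?_, by simp, ?_⟩
      · exact ((hasFDerivAt_Phi _ hw).const_mul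
          (-(1 / 2 : ℝ))).differentiableAt.differentiableWithinAt
      · rw [contDiffOn_zero]
        refine ((continuousOn_Psi (SchwartzMap.pderivCLM ℝ (e m)
          (SchwartzMap.pderivCLM ℝ (e n) R))).const_smul
          (-(1 / 2 : ℝ))).congr fun w hw => ?_
        exact ((hasFDerivAt_Phi _ hw).const_mul (-(1 / 2 : ℝ))).fderiv
    exact hG.congr fun w hw => hDloc m n w hw
  · intro v hv m
    have hv0 : (0 : ℝ) < ‖v‖ := norm_pos_iff.mpr hv
    -- parity facts
    have p0 : ∀ x : V2, R (-x) = (1 : ℝ) * R x := fun x => by rw [heven x, one_mul]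
    have p1 : ∀ x : V2, SchwartzMap.pderivCLM ℝ (e m) R (-x)
        = -(1 : ℝ) * SchwartzMap.pderivCLM ℝ (e m) R x :=
      pderiv_parity R 1 p0 (e m)
    have p2 : ∀ i : Fin 2, ∀ x : V2,
        SchwartzMap.pderivCLM ℝ (e i) (SchwartzMap.pderivCLM ℝ (e m) R) (-x)
          = (1 : ℝ) * SchwartzMap.pderivCLM ℝ (e i) (SchwartzMap.pderivCLM ℝ (e m) R) x := by
      intro i x
      have h := pderiv_parity (SchwartzMap.pderivCLM ℝ (e m) R) (-1)
        (fun x => by rw [p1 x]) (e i) x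
      simpa using h
    have p3 : ∀ i : Fin 2, ∀ x : V2,
        SchwartzMap.pderivCLM ℝ (e i) (SchwartzMap.pderivCLM ℝ (e i)
          (SchwartzMap.pderivCLM ℝ (e m) R)) (-x)
        = -(SchwartzMap.pderivCLM ℝ (e i) (SchwartzMap.pderivCLM ℝ (e i)
          (SchwartzMap.pderivCLM ℝ (e m) R)) x) := by
      intro i x
      have h := pderiv_parity (SchwartzMap.pderivCLM ℝ (e i)
        (SchwartzMap.pderivCLM ℝ (e m) R)) 1 (p2 i) (e i) x
      simpa using h
    -- the summed third derivative and the even integrand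
    have hψeven : ∀ t : ℝ,
        (-t) * (∑ i : Fin 2, SchwartzMap.pderivCLM ℝ (e i) (SchwartzMap.pderivCLM ℝ (e i)
          (SchwartzMap.pderivCLM ℝ (e m) R)) ((-t) • v))
        = t * ∑ i : Fin 2, SchwartzMap.pderivCLM ℝ (e i) (SchwartzMap.pderivCLM ℝ (e i)
          (SchwartzMap.pderivCLM ℝ (e m) R)) (t • v) := by
      intro t
      rw [neg_smul]
      simp only [p3]
      rw [Finset.sum_neg_distrib]
      ring
    -- per-term formula for the derivative of D m n
    have hterm : ∀ n : Fin 2,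
        fderiv ℝ (fun w : V2 => -(1 / (2 * ‖w‖)) *
          ∫ s : ℝ, fderiv ℝ (fun y => fderiv ℝ (fun z => R z) y (e n)) (s • ‖w‖⁻¹ • w) (e m))
          v (e n)
        = -(1 / 2 : ℝ) * ∫ t : ℝ, t * SchwartzMap.pderivCLM ℝ (e n)
            (SchwartzMap.pderivCLM ℝ (e n) (SchwartzMap.pderivCLM ℝ (e m) R)) (t • v) := by
      intro n
      have hev : (fun w : V2 => -(1 / (2 * ‖w‖)) *
          ∫ s : ℝ, fderiv ℝ (fun y => fderiv ℝ (fun z => R z) y (e n)) (s • ‖w‖⁻¹ • w) (e m))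
          =ᶠ[nhds v] fun w : V2 => -(1 / 2 : ℝ) * ∫ t : ℝ,
            SchwartzMap.pderivCLM ℝ (e m) (SchwartzMap.pderivCLM ℝ (e n) R) (t • w) :=
        Filter.eventually_of_mem (isOpen_ne.mem_nhds hv) fun w hw => hDloc m n w hw
      rw [hev.fderiv_eq,
        ((hasFDerivAt_Phi (SchwartzMap.pderivCLM ℝ (e m) (SchwartzMap.pderivCLM ℝ (e n) R))
          hv).const_mul (-(1 / 2 : ℝ))).fderiv]
      rw [ContinuousLinearMap.smul_apply,
        fderiv_integral (SchwartzMap.pderivCLM ℝ (e m) (SchwartzMap.pderivCLM ℝ (e n) R))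
          hv (e n), smul_eq_mul]
      congr 1
      apply MeasureTheory.integral_congr_ae
      refine Filter.Eventually.of_forall fun t => ?_
      change t * _ = t * _
      have hsw : SchwartzMap.pderivCLM ℝ (e n) (SchwartzMap.pderivCLM ℝ (e m)
          (SchwartzMap.pderivCLM ℝ (e n) R)) (t • v)
          = SchwartzMap.pderivCLM ℝ (e n) (SchwartzMap.pderivCLM ℝ (e n)
            (SchwartzMap.pderivCLM ℝ (e m) R)) (t • v) := by
        rw [SchwartzMap.pderivCLM_apply, SchwartzMap.pderivCLM_apply,
          show (⇑(SchwartzMap.pderivCLM ℝ (e m) (SchwartzMap.pderivCLM ℝ (e n) R)))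
            = ⇑(SchwartzMap.pderivCLM ℝ (e n) (SchwartzMap.pderivCLM ℝ (e m) R)) from
            funext fun x => pderiv_comm R (e m) (e n) x]
      rw [show fderiv ℝ (⇑(SchwartzMap.pderivCLM ℝ (e m) (SchwartzMap.pderivCLM ℝ (e n) R)))
          (t • v) (e n) = SchwartzMap.pderivCLM ℝ (e n) (SchwartzMap.pderivCLM ℝ (e m)
            (SchwartzMap.pderivCLM ℝ (e n) R)) (t • v) from
          (SchwartzMap.pderivCLM_apply ℝ (e n)
            (SchwartzMap.pderivCLM ℝ (e m) (SchwartzMap.pderivCLM ℝ (e n) R)) (t • v)).symm,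
        hsw]
    -- assemble the left-hand side
    rw [Finset.sum_congr rfl fun n _ => hterm n]
    rw [← Finset.mul_sum]
    rw [← integral_finset_sum _ (fun n _ =>
      integrable_mul_comp_smul' (SchwartzMap.pderivCLM ℝ (e n) (SchwartzMap.pderivCLM ℝ (e n)
        (SchwartzMap.pderivCLM ℝ (e m) R))) hv)]
    have hmulsum : (fun t : ℝ => ∑ n : Fin 2, t * SchwartzMap.pderivCLM ℝ (e n)
        (SchwartzMap.pderivCLM ℝ (e n) (SchwartzMap.pderivCLM ℝ (e m) R)) (t • v))
        = fun t : ℝ => t * ∑ n : Fin 2, SchwartzMap.pderivCLM ℝ (e n)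
          (SchwartzMap.pderivCLM ℝ (e n) (SchwartzMap.pderivCLM ℝ (e m) R)) (t • v) :=
      funext fun t => (Finset.mul_sum _ _ _).symm
    rw [hmulsum]
    rw [integral_even_split (fun t : ℝ => t * ∑ i : Fin 2, SchwartzMap.pderivCLM ℝ (e i)
      (SchwartzMap.pderivCLM ℝ (e i) (SchwartzMap.pderivCLM ℝ (e m) R)) (t • v))
      (fun t => hψeven t)]
    -- right-hand side
    simp only [integrand3, smul_smul]
    have h1 : (∫ s in Set.Ioi (0 : ℝ), s * ∑ i : Fin 2, SchwartzMap.pderivCLM ℝ (e i)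
        (SchwartzMap.pderivCLM ℝ (e i) (SchwartzMap.pderivCLM ℝ (e m) R)) ((s * ‖v‖⁻¹) • v))
        = ∫ s in Set.Ioi (0 : ℝ), ‖v‖ * ((‖v‖⁻¹ * s) * ∑ i : Fin 2, SchwartzMap.pderivCLM ℝ (e i)
            (SchwartzMap.pderivCLM ℝ (e i) (SchwartzMap.pderivCLM ℝ (e m) R))
            ((‖v‖⁻¹ * s) • v)) := by
      apply MeasureTheory.integral_congr_ae
      refine Filter.Eventually.of_forall fun s => ?_
      change s * _ = ‖v‖ * ((‖v‖⁻¹ * s) * _)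
      rw [mul_comm s ‖v‖⁻¹]
      rw [← mul_assoc ‖v‖ (‖v‖⁻¹ * s), ← mul_assoc ‖v‖ ‖v‖⁻¹ s,
        mul_inv_cancel₀ hv0.ne', one_mul]
    have h2 : (∫ s in Set.Ioi (0 : ℝ), ‖v‖ * ((‖v‖⁻¹ * s) * ∑ i : Fin 2,
          SchwartzMap.pderivCLM ℝ (e i) (SchwartzMap.pderivCLM ℝ (e i)
            (SchwartzMap.pderivCLM ℝ (e m) R)) ((‖v‖⁻¹ * s) • v)))
        = ‖v‖ * ∫ s in Set.Ioi (0 : ℝ), (‖v‖⁻¹ * s) * ∑ i : Fin 2,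
            SchwartzMap.pderivCLM ℝ (e i) (SchwartzMap.pderivCLM ℝ (e i)
              (SchwartzMap.pderivCLM ℝ (e m) R)) ((‖v‖⁻¹ * s) • v) :=
      MeasureTheory.integral_const_mul _ _
    have h3 : (∫ s in Set.Ioi (0 : ℝ), (‖v‖⁻¹ * s) * ∑ i : Fin 2,
          SchwartzMap.pderivCLM ℝ (e i) (SchwartzMap.pderivCLM ℝ (e i)
            (SchwartzMap.pderivCLM ℝ (e m) R)) ((‖v‖⁻¹ * s) • v))
        = ‖v‖ * ∫ t in Set.Ioi (0 : ℝ), t * ∑ i : Fin 2,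
            SchwartzMap.pderivCLM ℝ (e i) (SchwartzMap.pderivCLM ℝ (e i)
              (SchwartzMap.pderivCLM ℝ (e m) R)) (t • v) :=
      integral_Ioi_scale (fun t : ℝ => t * ∑ i : Fin 2,
        SchwartzMap.pderivCLM ℝ (e i) (SchwartzMap.pderivCLM ℝ (e i)
          (SchwartzMap.pderivCLM ℝ (e m) R)) (t • v)) hv0
    rw [h1, h2, h3]
    have hne : ‖v‖ ≠ 0 := hv0.ne'
    field_simp

end DivDrift

open MeasureTheory

/-- Divergence form of the limiting momentum diffusion: for an even Schwartz correlation
function `R` on `ℝ²`, the diffusion matrix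
`D_{mn}(v) = -(1/(2‖v‖)) ∫ ∂²_{y_m y_n} R(s v̂) ds` is `C¹` away from the origin and its
divergence `Σ_n ∂_{v_n} D_{mn}(v)` equals the drift
`E_m(v) = -(1/‖v‖²) ∫₀^∞ s (Δ ∂_{y_m} R)(s v̂) ds`. -/
theorem diffusion_matrix_divergence_eq_drift
    (R : SchwartzMap (EuclideanSpace ℝ (Fin 2)) ℝ)
    (heven : ∀ y : EuclideanSpace ℝ (Fin 2), R (-y) = R y) :
    let e : Fin 2 → EuclideanSpace ℝ (Fin 2) := fun i => EuclideanSpace.single i 1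
    let D : Fin 2 → Fin 2 → EuclideanSpace ℝ (Fin 2) → ℝ := fun m n v =>
      -(1 / (2 * ‖v‖)) *
        ∫ s : ℝ, fderiv ℝ (fun y => fderiv ℝ (fun z => R z) y (e n)) (s • ‖v‖⁻¹ • v) (e m)
    let Edrift : Fin 2 → EuclideanSpace ℝ (Fin 2) → ℝ := fun m v =>
      -(1 / ‖v‖ ^ 2) * ∫ s in Set.Ioi (0 : ℝ),
        s * ∑ i : Fin 2,
          fderiv ℝ (fun y => fderiv ℝ (fun z => fderiv ℝ (fun x => R x) z (e m)) y (e i))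
            (s • ‖v‖⁻¹ • v) (e i)
    (∀ m n : Fin 2, ContDiffOn ℝ 1 (D m n) {v | v ≠ 0}) ∧
    (∀ v : EuclideanSpace ℝ (Fin 2), v ≠ 0 → ∀ m : Fin 2,
      ∑ n : Fin 2, fderiv ℝ (D m n) v (e n) = Edrift m v) := by
  intro e D Edrift
  exact DivDrift.main_calc R heven e
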